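/- Let (V,g) be a finite-dimensional real vector space with a nondegenerate symmetric bilinear form g, let B be a (0,4)-tensor expressible as B = (φ/2)·A∧A + μ·g∧A + (η/2)·g∧g with A a symmetric bilinear form and φ, μ, η ∈ ℝ, φ ≠ 0, and suppose dim V = n ≥ 3. Then A² = φ⁻¹·((φ·tr(A) + (n−2)μ)·A + (μ·tr(A) + (n−1)η)·g − Ric(B)), where Ric(B) is the g-Ricci contraction of B and A² the g-square of A. -/

import Mathlib

variable {V : Type*} [AddCommGroup V] [Module ℝ V]

/-- Kulkarni–Nomizu product of two (0,2)-tensors. -/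
def kn (A B : V → V → ℝ) : V → V → V → V → ℝ := fun x1 x2 x3 x4 =>
  A x1 x4 * B x2 x3 + A x2 x3 * B x1 x4 - A x1 x3 * B x2 x4 - A x2 x4 * B x1 x3

/-- The endomorphism `(X ∧_A Y)Z = A(Y,Z)X − A(X,Z)Y`. -/
def wedgeV (A : V → V → ℝ) (x y z : V) : V := A y z • x - A x z • y

/-- Tachibana tensor `Q(A,T)` of a (0,2)-tensor `A` and a (0,4)-tensor `T`. -/
def Q4 (A : V → V → ℝ) (T : V → V → V → V → ℝ) : V → V → V → V → V → V → ℝ :=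
  fun x1 x2 x3 x4 x y =>
    -(T (wedgeV A x y x1) x2 x3 x4) - T x1 (wedgeV A x y x2) x3 x4
      - T x1 x2 (wedgeV A x y x3) x4 - T x1 x2 x3 (wedgeV A x y x4)

/-- if `B = (φ/2)·A∧A + μ·g∧A + (η/2)·g∧g` with `φ ≠ 0`, then
`A² = φ⁻¹·((φ·tr(A) + (n−2)μ)·A + (μ·tr(A) + (n−1)η)·g − Ric(B))`. -/
theorem stmt_17 {V : Type*} [AddCommGroup V] [Module ℝ V] [FiniteDimensional ℝ V]
    (n : ℕ) (hn3 : 3 ≤ n) (hdim : Module.finrank ℝ V = n)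
    (g A : V →ₗ[ℝ] V →ₗ[ℝ] ℝ)
    (hg : ∀ x y, g x y = g y x)
    (hgnd : ∀ x : V, (∀ y : V, g x y = 0) → x = 0)
    (hA : ∀ x y, A x y = A y x)
    (a : V →ₗ[ℝ] V) (ha : ∀ x y, g (a x) y = A x y)
    (e : Module.Basis (Fin n) ℝ V) (ε : Fin n → ℝ) (hε : ∀ i, ε i = 1 ∨ ε i = -1)
    (horth : ∀ i j, g (e i) (e j) = if i = j then ε i else 0)
    (B : V → V → V → V → ℝ)
    (RicB : V → V → ℝ)
    (hRicB : ∀ x y, RicB x y = ∑ i, ε i * B (e i) x y (e i))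
    (φ μ η : ℝ) (hφ : φ ≠ 0)
    (hB : ∀ x₁ x₂ x₃ x₄ : V,
      B x₁ x₂ x₃ x₄
        = (φ / 2) * kn (fun u v => A u v) (fun u v => A u v) x₁ x₂ x₃ x₄
          + μ * kn (fun u v => g u v) (fun u v => A u v) x₁ x₂ x₃ x₄
          + (η / 2) * kn (fun u v => g u v) (fun u v => g u v) x₁ x₂ x₃ x₄) :
    ∀ x y : V,
      A (a x) y
        = φ⁻¹ * ((φ * LinearMap.trace ℝ V a + ((n : ℝ) - 2) * μ) * A x y
            + (μ * LinearMap.trace ℝ V a + ((n : ℝ) - 1) * η) * g x y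
            - RicB x y) := by
  have hε2 : ∀ i, ε i * ε i = 1 := by
    intro i; rcases hε i with h | h <;> rw [h] <;> norm_num
  -- orthonormal expansion of any vector
  have hexp : ∀ x : V, x = ∑ i, (ε i * g x (e i)) • e i := by
    intro x
    have hd : ∀ j, g (x - ∑ i, (ε i * g x (e i)) • e i) (e j) = 0 := by
      intro j
      simp only [map_sub, map_sum, map_smul, LinearMap.sub_apply, LinearMap.sum_apply,
        LinearMap.smul_apply, smul_eq_mul, horth]
      rw [Finset.sum_eq_single j]
      · simp only [if_pos rfl]
        rcases hε j with h | h <;> rw [h] <;> simp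
      · intro b _ hb; simp [hb]
      · intro h; exact absurd (Finset.mem_univ j) h
    have h0 : x - ∑ i, (ε i * g x (e i)) • e i = 0 := by
      apply hgnd
      intro y
      have hy := Module.Basis.sum_repr e y
      rw [← hy]
      simp only [map_sum, map_smul, smul_eq_mul]
      exact Finset.sum_eq_zero fun j _ => by rw [hd j, mul_zero]
    exact sub_eq_zero.mp h0
  have hax : ∀ x : V, a x = ∑ i, (ε i * A x (e i)) • e i := by
    intro x
    have h := hexp (a x)
    simp only [ha] at h
    exact h
  -- the key sums
  have hS2 : ∀ x y : V, ∑ i, ε i * (A x (e i) * A y (e i)) = A (a x) y := by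
    intro x y
    conv_rhs => rw [hax x]
    rw [map_sum, LinearMap.sum_apply]
    simp only [map_smul, LinearMap.smul_apply, smul_eq_mul]
    refine Finset.sum_congr rfl fun i _ => ?_
    rw [hA (e i) y]; ring
  have hSA : ∀ z w : V, ∑ i, ε i * (g z (e i) * A w (e i)) = A w z := by
    intro z w
    conv_rhs => rw [hexp z]
    rw [map_sum]
    simp only [map_smul, smul_eq_mul]
    exact Finset.sum_congr rfl fun i _ => by ring
  have hSg : ∀ z w : V, ∑ i, ε i * (g z (e i) * g w (e i)) = g w z := by
    intro z w
    conv_rhs => rw [hexp z]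
    rw [map_sum]
    simp only [map_smul, smul_eq_mul]
    exact Finset.sum_congr rfl fun i _ => by ring
  have hn : ∑ i : Fin n, ε i * ε i = (n : ℝ) := by
    rw [Finset.sum_congr rfl fun i _ => hε2 i]
    simp
  -- trace
  have htr : LinearMap.trace ℝ V a = ∑ i, ε i * A (e i) (e i) := by
    rw [LinearMap.trace_eq_matrix_trace ℝ e a, Matrix.trace]
    refine Finset.sum_congr rfl fun i _ => ?_
    rw [Matrix.diag_apply, LinearMap.toMatrix_apply, hax (e i)]
    simp only [map_sum, map_smul, Module.Basis.repr_self, Finsupp.smul_single, smul_eq_mul, mul_one,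
      Finsupp.coe_finset_sum, Finset.sum_apply, Finsupp.single_apply]
    rw [Finset.sum_eq_single i]
    · simp
    · intro b _ hb; simp [hb]
    · intro h; exact absurd (Finset.mem_univ i) h
  intro x y
  have hgii : ∀ i, g (e i) (e i) = ε i := by intro i; rw [horth]; simp
  have step : ∀ i : Fin n, ε i * B (e i) x y (e i)
      = (φ * A x y) * (ε i * A (e i) (e i))
        - φ * (ε i * (A x (e i) * A y (e i)))
        + (μ * A x y) * (ε i * ε i)
        + (μ * g x y) * (ε i * A (e i) (e i))
        - μ * (ε i * (g y (e i) * A x (e i)))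
        - μ * (ε i * (g x (e i) * A y (e i)))
        + (η * g x y) * (ε i * ε i)
        - η * (ε i * (g y (e i) * g x (e i))) := by
    intro i
    rw [hB]
    simp only [kn, hgii, hg (e i) y, hA (e i) y, hA (e i) x]
    ring
  have hmain : RicB x y
      = φ * ((∑ i, ε i * A (e i) (e i)) * A x y - A (a x) y)
        + μ * ((n : ℝ) * A x y + (∑ i, ε i * A (e i) (e i)) * g x y - 2 * A x y)
        + η * ((n : ℝ) * g x y - g x y) := by
    rw [hRicB, Finset.sum_congr rfl fun i _ => step i]
    simp only [Finset.sum_add_distrib, Finset.sum_sub_distrib, ← Finset.mul_sum]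
    rw [hS2, hSA y x, hSA x y, hSg y x, hn, hA y x]
    ring
  rw [htr, hmain]
  field_simp
  ring
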